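/- For all real parameters $Q_{1,1}, Q_{2,1}, Q_{1,2}, Q_{2,2} \neq 0$, $r_{1,1}, r_{2,1}, r_{1,2}, r_{2,2} \in \mathbb{R}$, and $a_1, a_2, a_3, a_4 \in \mathbb{R}$, the $11 \times 8$ matrix obtained by stacking $E$ on top of $C$ has rank at most $7 < 8$. Consequently, condition (C1) of complete observability, namely $\mathrm{rank}([E^\top, C^\top]^\top) = 8$, fails for the linearized 2P2S battery pack model. -/

import Mathlib

open Matrix Module

private lemma rank_fromColumns_le' {m n₁ n₂ : Type*} [Fintype m] [Fintype n₁] [Fintype n₂]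
    (A₁ : Matrix m n₁ ℝ) (A₂ : Matrix m n₂ ℝ) :
    (fromCols A₁ A₂).rank ≤ A₁.rank + A₂.rank := by
  classical
  have hsub : LinearMap.range (fromCols A₁ A₂).mulVecLin ≤
      LinearMap.range A₁.mulVecLin ⊔ LinearMap.range A₂.mulVecLin := by
    rintro y ⟨x, rfl⟩
    have hx : x = Sum.elim (x ∘ Sum.inl) (x ∘ Sum.inr) := by
      funext i; cases i <;> rfl
    rw [mulVecLin_apply, hx, fromCols_mulVec_sumElim]
    exact Submodule.add_mem_sup ⟨_, rfl⟩ ⟨_, rfl⟩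
  have h1 : (fromCols A₁ A₂).rank ≤
      finrank ℝ ↥(LinearMap.range A₁.mulVecLin ⊔ LinearMap.range A₂.mulVecLin) :=
    Submodule.finrank_mono hsub
  have h2 := Submodule.finrank_sup_add_finrank_inf_eq
    (LinearMap.range A₁.mulVecLin) (LinearMap.range A₂.mulVecLin)
  have h3 : A₁.rank + A₂.rank = finrank ℝ ↥(LinearMap.range A₁.mulVecLin) +
      finrank ℝ ↥(LinearMap.range A₂.mulVecLin) := rfl
  omega

private lemma rank_fromRows_le' {m₁ m₂ n : Type*} [Fintype m₁] [Fintype m₂] [Fintype n]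
    (A : Matrix m₁ n ℝ) (B : Matrix m₂ n ℝ) :
    (fromRows A B).rank ≤ A.rank + B.rank := by
  rw [← Matrix.rank_transpose, transpose_fromRows]
  calc (fromCols Aᵀ Bᵀ).rank ≤ Aᵀ.rank + Bᵀ.rank := rank_fromColumns_le' _ _
    _ = A.rank + B.rank := by rw [Matrix.rank_transpose, Matrix.rank_transpose]

/-- For the linearized 2P2S battery pack model, the stacked `11 × 8` matrix
`[Eᵀ, Cᵀ]ᵀ` has rank at most `7 < 8`; condition (C1) of complete observability
(`rank [Eᵀ, Cᵀ]ᵀ = 8`) fails. -/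
theorem stmt4 (Q11 Q21 Q12 Q22 : ℝ)
    (hQ11 : Q11 ≠ 0) (hQ21 : Q21 ≠ 0) (hQ12 : Q12 ≠ 0) (hQ22 : Q22 ≠ 0)
    (r11 r21 r12 r22 a1 a2 a3 a4 : ℝ)
    (E : Matrix (Fin 8) (Fin 8) ℝ)
    (hE : E = Matrix.diagonal ![1, 1, 1, 1, 0, 0, 0, 0])
    (C : Matrix (Fin 3) (Fin 8) ℝ)
    (hC : C = !![a1, 0, a3, 0, r11, 0, r12, 0;
                 a1, 0, 0, a4, r11, 0, 0, r22;
                 0, a2, a3, 0, 0, r21, r12, 0]) :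
    (Matrix.fromRows E C).rank ≤ 7 ∧ ¬ (Matrix.fromRows E C).rank = 8 := by
  have hErank : E.rank ≤ 4 := by
    set D : Matrix (Fin 8) (Fin 4) ℝ :=
      !![1,0,0,0; 0,1,0,0; 0,0,1,0; 0,0,0,1; 0,0,0,0; 0,0,0,0; 0,0,0,0; 0,0,0,0] with hD
    set F : Matrix (Fin 4) (Fin 8) ℝ :=
      !![1,0,0,0,0,0,0,0; 0,1,0,0,0,0,0,0; 0,0,1,0,0,0,0,0; 0,0,0,1,0,0,0,0] with hF
    have hfac : E = D * F := by
      rw [hE]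
      ext i j
      fin_cases i <;> fin_cases j <;>
        norm_num [hD, hF, Matrix.mul_apply, Fin.sum_univ_four, Matrix.diagonal_apply, Fin.ext_iff, Matrix.vecHead, Matrix.vecTail, Matrix.cons_val_two, Matrix.cons_val_three]
    calc E.rank ≤ F.rank := by rw [hfac]; exact Matrix.rank_mul_le_right D F
      _ ≤ 4 := by simpa using F.rank_le_card_height
  have hCrank : C.rank ≤ 3 := by simpa using C.rank_le_card_height
  have h := rank_fromRows_le' E C
  constructor
  · omega
  · omega
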